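/- Let Φ be a crystallographic root system, let Φ'' be a root subsystem of Φ, and let γ ∈ Φ be a root of minimal squared length in Φ (a short root), i.e. (γ|γ) ≤ (β|β) for every β ∈ Φ. If γ = β_1 + β_2 + ⋯ + β_m for some (not necessarily distinct) roots β_1, …, β_m ∈ Φ'', then γ ∈ Φ''. -/

import Mathlib

open RealInnerProductSpace Submodule

variable {V : Type*} [NormedAddCommGroup V] [InnerProductSpace ℝ V] [FiniteDimensional ℝ V]

/-- The orthogonal reflection in the hyperplane `α^⊥`. -/
noncomputable def sRefl (α : V) : V ≃ₗᵢ[ℝ] V := reflection (ℝ ∙ α)ᗮ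

/-- `Φ` is a root system in `V`. -/
def IsRootSystem (Φ : Set V) : Prop :=
  Φ.Finite ∧ (0 : V) ∉ Φ ∧ span ℝ Φ = ⊤ ∧
    (∀ α ∈ Φ, ∀ β ∈ Φ, sRefl α β ∈ Φ) ∧
    (∀ α ∈ Φ, ∀ r : ℝ, r • α ∈ Φ → r = 1 ∨ r = -1)

/-- `Φ` is crystallographic. -/
def IsCrystallographic (Φ : Set V) : Prop :=
  ∀ α ∈ Φ, ∀ β ∈ Φ, ∃ k : ℤ, 2 * ⟪α, β⟫ / ⟪α, α⟫ = (k : ℝ)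

/-- `Φ'` is a root subsystem of `Φ`. -/
def IsRootSubsystem (Φ Φ' : Set V) : Prop :=
  Φ' ⊆ Φ ∧ ∀ α ∈ Φ', ∀ β ∈ Φ', sRefl α β ∈ Φ'

/-- The coroot `α^∨ = 2α/(α|α)`. -/
noncomputable def coroot (α : V) : V := (2 / ⟪α, α⟫) • α

/-- The subgroup `W_R` of the orthogonal group of `V` generated by the reflections
`s_α`, `α ∈ R`. -/
noncomputable def weylGroup (R : Set V) : Subgroup (V ≃ₗᵢ[ℝ] V) :=
  Subgroup.closure (sRefl '' R)


set_option linter.unusedSectionVars false in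
lemma sRefl_apply (α x : V) : sRefl α x = x - (2 * ⟪α, x⟫ / ⟪α, α⟫) • α := by
  rw [sRefl, reflection_apply, starProjection_orthogonal_val,
    starProjection_singleton, real_inner_self_eq_norm_sq]
  simp only [RCLike.ofReal_real_eq_id, id_eq]
  match_scalars <;> ring

set_option linter.unusedSectionVars false in
lemma sum_inner_nonpos (γ : V) (l : List V) (h : ∀ β ∈ l, ⟪γ, β⟫ ≤ 0) :
    ⟪γ, l.sum⟫ ≤ 0 := by
  induction l with
  | nil => simp
  | cons a t ih =>
    simp only [List.sum_cons, inner_add_right]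
    have := h a (by simp)
    have := ih (fun β hβ => h β (List.mem_cons_of_mem a hβ))
    linarith

theorem stmt_12 (Φ Φ'' : Set V) (hΦ : IsRootSystem Φ) (hcr : IsCrystallographic Φ)
    (hsub : IsRootSubsystem Φ Φ'')
    (γ : V) (hγ : γ ∈ Φ) (hshort : ∀ β ∈ Φ, ⟪γ, γ⟫ ≤ ⟪β, β⟫)
    (l : List V) (hl : ∀ β ∈ l, β ∈ Φ'') (hsum : γ = l.sum) :
    γ ∈ Φ'' := by
  classical
  obtain ⟨hfin, h0, hspan, hrefl, hred⟩ := hΦ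
  obtain ⟨hsub1, hsub2⟩ := hsub
  suffices H : ∀ n, ∀ γ ∈ Φ, (∀ β ∈ Φ, ⟪γ, γ⟫ ≤ ⟪β, β⟫) → ∀ l : List V,
      (∀ β ∈ l, β ∈ Φ'') → γ = l.sum → l.length = n → γ ∈ Φ'' by
    exact H l.length γ hγ hshort l hl hsum rfl
  intro n
  induction n using Nat.strong_induction_on with
  | _ n ih =>
  clear hγ hshort hl hsum
  intro γ hγ hshort l hl hsum hn
  subst hn
  -- γ ≠ 0
  have hγ0 : γ ≠ 0 := fun h => h0 (h ▸ hγ)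
  have hγγ : (0:ℝ) < ⟪γ, γ⟫ := by
    rw [real_inner_self_eq_norm_sq]; exact pow_pos (norm_pos_iff.mpr hγ0) 2
  -- find β in l with positive inner product
  have hexist : ∃ β ∈ l, 0 < ⟪γ, β⟫ := by
    by_contra h
    push_neg at h
    have := sum_inner_nonpos γ l h
    rw [← hsum] at this
    linarith
  obtain ⟨β, hβl, hpos⟩ := hexist
  have hβ'' : β ∈ Φ'' := hl β hβl
  have hβΦ : β ∈ Φ := hsub1 hβ''
  have hβ0 : β ≠ 0 := fun h => h0 (h ▸ hβΦ)
  have hββ : (0:ℝ) < ⟪β, β⟫ := by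
    rw [real_inner_self_eq_norm_sq]; exact pow_pos (norm_pos_iff.mpr hβ0) 2
  by_cases hcol : ∃ r : ℝ, γ = r • β
  · obtain ⟨r, hr⟩ := hcol
    rcases hred β hβΦ r (hr ▸ hγ) with h1 | h1
    · rw [h1, one_smul] at hr
      exact hr ▸ hβ''
    · exfalso
      rw [h1, neg_one_smul] at hr
      rw [hr] at hpos
      simp only [inner_neg_left] at hpos
      linarith
  -- not collinear: strict Cauchy-Schwarz
  · have hCS : ⟪γ, β⟫ < ‖γ‖ * ‖β‖ := by
      rw [inner_lt_norm_mul_iff_real]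
      intro h
      refine hcol ⟨‖γ‖ / ‖β‖, ?_⟩
      have hb : ‖β‖ ≠ 0 := norm_ne_zero_iff.mpr hβ0
      have h2 : (‖β‖)⁻¹ • (‖β‖ • γ) = (‖β‖)⁻¹ • (‖γ‖ • β) := by rw [h]
      rw [smul_smul, smul_smul, inv_mul_cancel₀ hb, one_smul] at h2
      rw [div_eq_inv_mul]; exact h2
    have hCS2 : ⟪γ, β⟫ ^ 2 < ⟪γ, γ⟫ * ⟪β, β⟫ := by
      rw [real_inner_self_eq_norm_sq, real_inner_self_eq_norm_sq]
      have : ⟪γ, β⟫ ^ 2 < (‖γ‖ * ‖β‖) ^ 2 := by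
        apply sq_lt_sq' _ hCS
        nlinarith
      nlinarith [this]
    obtain ⟨k, hk⟩ := hcr β hβΦ γ hγ
    obtain ⟨m, hm⟩ := hcr γ hγ β hβΦ
    have hsymm : ⟪β, γ⟫ = ⟪γ, β⟫ := real_inner_comm γ β
    -- k, m positive; k ≤ m; k*m < 4 ⇒ k = 1
    have hkpos : (0:ℝ) < k := by
      rw [← hk, hsymm]; exact div_pos (by linarith) hββ
    have hmpos : (0:ℝ) < m := by
      rw [← hm]; exact div_pos (by linarith) hγγ
    have hkm : (k:ℝ) * m < 4 := by
      rw [← hk, ← hm, hsymm]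
      rw [div_mul_div_comm]
      rw [div_lt_iff₀ (by positivity)]
      nlinarith [hCS2]
    have hklem : (k:ℝ) ≤ m := by
      rw [← hk, ← hm, hsymm]
      apply div_le_div_of_nonneg_left (by linarith) hγγ (hshort β hβΦ)
    have hk1 : (k:ℝ) = 1 := by
      have hk1' : (1:ℤ) ≤ k := by
        have : (0:ℤ) < k := by exact_mod_cast hkpos
        omega
      have hm1' : (k:ℤ) ≤ m := by exact_mod_cast hklem
      have : (k:ℤ) * k ≤ k * m := by nlinarith
      have h4 : (k:ℤ) * m < 4 := by exact_mod_cast hkm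
      have : (k:ℤ) < 2 := by nlinarith
      have : (k:ℤ) = 1 := by omega
      exact_mod_cast this
    -- reflection gives γ - β
    have hreflγ : sRefl β γ = γ - β := by
      rw [sRefl_apply, hk, hk1, one_smul]
    have hγ' : γ - β ∈ Φ := hreflγ ▸ hrefl β hβΦ γ hγ
    have hshort' : ∀ δ ∈ Φ, ⟪γ - β, γ - β⟫ ≤ ⟪δ, δ⟫ := by
      intro δ hδ
      have : ⟪γ - β, γ - β⟫ = ⟪γ, γ⟫ := by
        rw [← hreflγ, real_inner_self_eq_norm_sq, real_inner_self_eq_norm_sq,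
          LinearIsometryEquiv.norm_map]
      rw [this]; exact hshort δ hδ
    have herase : γ - β = (l.erase β).sum := by
      have := List.sum_erase hβl
      rw [hsum, ← this]; abel
    have hlen : (l.erase β).length < l.length := by
      rw [List.length_erase_of_mem hβl]
      exact Nat.sub_lt (List.length_pos_iff.mpr (List.ne_nil_of_mem hβl)) one_pos
    have hmem : γ - β ∈ Φ'' :=
      ih _ hlen (γ - β) hγ' hshort' (l.erase β)
        (fun δ hδ => hl δ (List.mem_of_mem_erase hδ)) herase rfl
    -- γ = sRefl β (γ - β)
    have : sRefl β (γ - β) = γ := by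
      rw [← hreflγ, sRefl]
      exact reflection_reflection _ γ
    exact this ▸ hsub2 β hβ'' (γ - β) hmem
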